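/- Let $\Omega \subset \mathbb{R}^n$ be a bounded open set, $c_1 > 0$, and $w \in C^2(\Omega)$ with $w \ge c_1$ in $\Omega$. Set $\varphi(y) = e^{\delta|y|^2}$. Then there exist $\delta > 0$, depending only on $R := \sup\{|y| : y \in \Omega\}$, and $\bar\epsilon > 0$, depending only on $\delta$, $c_1$ and $R$, such that for all $0 < \epsilon < \bar\epsilon$, the matrix inequality $A_{w+\epsilon\varphi} \ge (1 + \epsilon\tfrac{\varphi}{w}) A_w + \tfrac{\epsilon\delta}{2}\varphi w I$ holds pointwise in $\Omega$ (in the sense of symmetric matrices). -/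

import Mathlib

open Filter MeasureTheory

noncomputable def grad {n : ℕ} (w : EuclideanSpace ℝ (Fin n) → ℝ)
    (x : EuclideanSpace ℝ (Fin n)) : Fin n → ℝ :=
  fun i => fderiv ℝ w x (EuclideanSpace.single i 1)

noncomputable def hess {n : ℕ} (w : EuclideanSpace ℝ (Fin n) → ℝ)
    (x : EuclideanSpace ℝ (Fin n)) : Matrix (Fin n) (Fin n) ℝ :=
  Matrix.of fun i j =>
    fderiv ℝ (fun y => fderiv ℝ w y (EuclideanSpace.single i 1)) x (EuclideanSpace.single j 1)

noncomputable def gradSq {n : ℕ} (w : EuclideanSpace ℝ (Fin n) → ℝ)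
    (x : EuclideanSpace ℝ (Fin n)) : ℝ :=
  ∑ i, (grad w x i) ^ 2

noncomputable def Aw {n : ℕ} (w : EuclideanSpace ℝ (Fin n) → ℝ)
    (x : EuclideanSpace ℝ (Fin n)) : Matrix (Fin n) (Fin n) ℝ :=
  w x • hess w x - ((1 / 2) * gradSq w x) • (1 : Matrix (Fin n) (Fin n) ℝ)

noncomputable def Asch (n : ℕ) (u : EuclideanSpace ℝ (Fin n) → ℝ)
    (x : EuclideanSpace ℝ (Fin n)) : Matrix (Fin n) (Fin n) ℝ :=
  (-(2 / ((n : ℝ) - 2)) * (u x) ^ (-(((n : ℝ) + 2) / ((n : ℝ) - 2)))) • hess u x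
    + ((2 * (n : ℝ) / ((n : ℝ) - 2) ^ 2) * (u x) ^ (-(2 * (n : ℝ) / ((n : ℝ) - 2)))) •
        Matrix.of (fun i j => grad u x i * grad u x j)
    - ((2 / ((n : ℝ) - 2) ^ 2) * (u x) ^ (-(2 * (n : ℝ) / ((n : ℝ) - 2))) * gradSq u x) •
        (1 : Matrix (Fin n) (Fin n) ℝ)

noncomputable def kelvin {n : ℕ} (u : EuclideanSpace ℝ (Fin n) → ℝ)
    (x : EuclideanSpace ℝ (Fin n)) (l : ℝ) (y : EuclideanSpace ℝ (Fin n)) : ℝ :=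
  (l ^ (n - 2) / ‖y - x‖ ^ (n - 2)) * u (x + (l ^ 2 / ‖y - x‖ ^ 2) • (y - x))


lemma psd_aux {n : ℕ} (x : EuclideanSpace ℝ (Fin n)) (a c : ℝ) (ha : 0 ≤ a) (hc : 0 ≤ c)
    (M : Matrix (Fin n) (Fin n) ℝ)
    (hM : ∀ i j, M i j = a * (x i * x j) + (if i = j then c else 0)) :
    M.PosSemidef := by
  rw [Matrix.posSemidef_iff_dotProduct_mulVec]
  constructor
  · ext i j
    rw [Matrix.conjTranspose_apply, hM i j, hM j i, star_trivial]
    by_cases h : i = j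
    · subst h; rfl
    · simp only [h, Ne.symm h, if_false]; ring
  · intro v
    have hrow : ∀ i, (∑ j, M i j * v j) = a * x i * (∑ j, x j * v j) + c * v i := by
      intro i
      have h : ∀ j, M i j * v j = a * x i * (x j * v j) + (if i = j then c * v j else 0) := by
        intro j; rw [hM i j]; by_cases h : i = j <;> simp [h] <;> ring
      simp only [h, Finset.sum_add_distrib, Finset.sum_ite_eq, Finset.mem_univ, if_true,
        ← Finset.mul_sum]
    have key : dotProduct (star v) (M.mulVec v)
        = a * (∑ j, x j * v j) ^ 2 + c * ∑ i, (v i) ^ 2 := by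
      simp only [dotProduct, Matrix.mulVec, Pi.star_apply, star_trivial]
      calc (∑ i, v i * ∑ j, M i j * v j)
          = ∑ i, (a * (∑ j, x j * v j) * (x i * v i) + c * (v i) ^ 2) := by
            refine Finset.sum_congr rfl fun i _ => ?_
            rw [hrow i]; ring
        _ = a * (∑ j, x j * v j) ^ 2 + c * ∑ i, (v i) ^ 2 := by
            rw [Finset.sum_add_distrib, ← Finset.mul_sum, ← Finset.mul_sum, sq]
            ring_nf
    rw [key]
    have h1 : 0 ≤ ∑ i, (v i) ^ 2 := Finset.sum_nonneg fun i _ => sq_nonneg _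
    positivity

lemma phi_hasFDerivAt {n : ℕ} (δ : ℝ) (x : EuclideanSpace ℝ (Fin n)) :
    HasFDerivAt (fun y : EuclideanSpace ℝ (Fin n) => Real.exp (δ * ‖y‖ ^ 2))
      ((2 * δ * Real.exp (δ * ‖x‖ ^ 2)) • (innerSL ℝ x)) x := by
  have h := (((hasStrictFDerivAt_norm_sq x).hasFDerivAt).const_mul δ).exp
  refine h.congr_fderiv ?_
  ext v
  simp [two_smul]
  ring

lemma phi_fderiv_single {n : ℕ} (δ : ℝ) (x : EuclideanSpace ℝ (Fin n)) (i : Fin n) :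
    fderiv ℝ (fun y : EuclideanSpace ℝ (Fin n) => Real.exp (δ * ‖y‖ ^ 2)) x
        (EuclideanSpace.single i 1)
      = 2 * δ * Real.exp (δ * ‖x‖ ^ 2) * x i := by
  rw [(phi_hasFDerivAt δ x).fderiv]
  simp [EuclideanSpace.inner_single_right, real_inner_comm]

lemma phi2_hasFDerivAt {n : ℕ} (δ : ℝ) (x : EuclideanSpace ℝ (Fin n)) (i : Fin n) :
    HasFDerivAt (fun y : EuclideanSpace ℝ (Fin n) => 2 * δ * Real.exp (δ * ‖y‖ ^ 2) * y i)
      ((2 * δ * Real.exp (δ * ‖x‖ ^ 2)) •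
          (EuclideanSpace.proj i : EuclideanSpace ℝ (Fin n) →L[ℝ] ℝ)
        + (x i) • ((2 * δ) • ((2 * δ * Real.exp (δ * ‖x‖ ^ 2)) • (innerSL ℝ x)))) x :=
  ((phi_hasFDerivAt δ x).const_mul (2 * δ)).mul
    ((EuclideanSpace.proj i : EuclideanSpace ℝ (Fin n) →L[ℝ] ℝ).hasFDerivAt)

lemma grad_u {n : ℕ} {Ω : Set (EuclideanSpace ℝ (Fin n))} (hΩ : IsOpen Ω)
    {w : EuclideanSpace ℝ (Fin n) → ℝ} (hw : ContDiffOn ℝ 2 w Ω)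
    {x : EuclideanSpace ℝ (Fin n)} (hx : x ∈ Ω) (ε δ : ℝ) (i : Fin n) :
    grad (fun y => w y + ε * Real.exp (δ * ‖y‖ ^ 2)) x i
      = grad w x i + ε * (2 * δ * Real.exp (δ * ‖x‖ ^ 2) * x i) := by
  have hdw : DifferentiableAt ℝ w x :=
    (hw.contDiffAt (hΩ.mem_nhds hx)).differentiableAt (by norm_num)
  have h := (hdw.hasFDerivAt.fun_add ((phi_hasFDerivAt δ x).const_mul ε)).fderiv
  unfold grad
  rw [h]
  simp only [ContinuousLinearMap.add_apply, ContinuousLinearMap.coe_smul', Pi.smul_apply,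
    smul_eq_mul, innerSL_apply_apply, EuclideanSpace.inner_single_right]
  simp

lemma hess_u {n : ℕ} {Ω : Set (EuclideanSpace ℝ (Fin n))} (hΩ : IsOpen Ω)
    {w : EuclideanSpace ℝ (Fin n) → ℝ} (hw : ContDiffOn ℝ 2 w Ω)
    {x : EuclideanSpace ℝ (Fin n)} (hx : x ∈ Ω) (ε δ : ℝ) (i j : Fin n) :
    hess (fun y => w y + ε * Real.exp (δ * ‖y‖ ^ 2)) x i j
      = hess w x i j
        + ε * (2 * δ * Real.exp (δ * ‖x‖ ^ 2) * (if i = j then 1 else 0)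
            + 2 * δ * (2 * δ * Real.exp (δ * ‖x‖ ^ 2)) * (x i * x j)) := by
  have hev : (fun y => fderiv ℝ (fun y => w y + ε * Real.exp (δ * ‖y‖ ^ 2)) y
        (EuclideanSpace.single i 1))
      =ᶠ[nhds x] (fun y => fderiv ℝ w y (EuclideanSpace.single i 1)
        + ε * (2 * δ * Real.exp (δ * ‖y‖ ^ 2) * y i)) := by
    filter_upwards [hΩ.mem_nhds hx] with y hy
    have hdw : DifferentiableAt ℝ w y :=
      (hw.contDiffAt (hΩ.mem_nhds hy)).differentiableAt (by norm_num)
    have h := (hdw.hasFDerivAt.fun_add ((phi_hasFDerivAt δ y).const_mul ε)).fderiv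
    rw [h]
    simp only [ContinuousLinearMap.add_apply, ContinuousLinearMap.coe_smul', Pi.smul_apply,
      smul_eq_mul, innerSL_apply_apply, EuclideanSpace.inner_single_right]
    simp
  have hg1 : DifferentiableAt ℝ
      (fun y => fderiv ℝ w y (EuclideanSpace.single i 1)) x := by
    have hfd : ContDiffAt ℝ 1 (fderiv ℝ w) x :=
      (hw.contDiffAt (hΩ.mem_nhds hx)).fderiv_right (by norm_num)
    exact ((ContinuousLinearMap.apply ℝ ℝ
      (EuclideanSpace.single i 1 : EuclideanSpace ℝ (Fin n))).differentiableAt).comp x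
      (hfd.differentiableAt (by norm_num))
  have hstep : hess (fun y => w y + ε * Real.exp (δ * ‖y‖ ^ 2)) x i j
      = fderiv ℝ (fun y => fderiv ℝ w y (EuclideanSpace.single i 1)
          + ε * (2 * δ * Real.exp (δ * ‖y‖ ^ 2) * y i)) x (EuclideanSpace.single j 1) := by
    unfold hess
    rw [Matrix.of_apply, hev.fderiv_eq]
  rw [hstep, (hg1.hasFDerivAt.fun_add ((phi2_hasFDerivAt δ x i).const_mul ε)).fderiv]
  unfold hess
  by_cases h : i = j
  · subst h
    simp [EuclideanSpace.inner_single_right, EuclideanSpace.single_apply]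
    ring
  · simp [EuclideanSpace.inner_single_right, EuclideanSpace.single_apply, h, Ne.symm h]
    left; ring

theorem stmt1 {n : ℕ} (hn : 3 ≤ n) (Ω : Set (EuclideanSpace ℝ (Fin n)))
    (hΩ : IsOpen Ω) (hΩb : Bornology.IsBounded Ω)
    (c₁ : ℝ) (hc₁ : 0 < c₁) (w : EuclideanSpace ℝ (Fin n) → ℝ)
    (hw : ContDiffOn ℝ 2 w Ω) (hwc : ∀ x ∈ Ω, c₁ ≤ w x) :
    ∃ δ > (0 : ℝ), ∃ ε' > (0 : ℝ), ∀ ε : ℝ, 0 < ε → ε < ε' → ∀ x ∈ Ω,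
      (Aw (fun y => w y + ε * Real.exp (δ * ‖y‖ ^ 2)) x
        - ((1 + ε * (Real.exp (δ * ‖x‖ ^ 2) / w x)) • Aw w x
            + (ε * δ / 2 * Real.exp (δ * ‖x‖ ^ 2) * w x) •
                (1 : Matrix (Fin n) (Fin n) ℝ))).PosSemidef := by
  obtain ⟨R, hR⟩ := hΩb.exists_norm_le
  set δ : ℝ := 1 / (2 * (1 + R ^ 2)) with hδdef
  have hRpos : (0:ℝ) < 1 + R ^ 2 := by positivity
  have hδpos : 0 < δ := by positivity
  refine ⟨δ, hδpos, 1, one_pos, fun ε hε hε1 x hx => ?_⟩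
  -- abbreviations (not `set`, to keep ring-compatible atoms)
  have hp : (0:ℝ) < Real.exp (δ * ‖x‖ ^ 2) := Real.exp_pos _
  have hW : (0:ℝ) < w x := lt_of_lt_of_le hc₁ (hwc x hx)
  have hWne : w x ≠ 0 := ne_of_gt hW
  have hr2 : ∑ i, (x i) ^ 2 = ‖x‖ ^ 2 := by
    rw [EuclideanSpace.norm_eq, Real.sq_sqrt (by positivity)]
    simp [Real.norm_eq_abs, sq_abs]
  have hδr : δ * ‖x‖ ^ 2 ≤ 1 / 2 := by
    have h1 : ‖x‖ ^ 2 ≤ R ^ 2 := by nlinarith [norm_nonneg x, hR x hx]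
    have ht : δ * (2 * (1 + R ^ 2)) = 1 := by rw [hδdef]; field_simp
    nlinarith [hδpos]
  -- the quadratic-form decomposition
  have hQ : gradSq (fun y => w y + ε * Real.exp (δ * ‖y‖ ^ 2)) x
      = gradSq w x
        + (4 * ε * δ * Real.exp (δ * ‖x‖ ^ 2)) * (∑ i, grad w x i * x i)
        + (4 * ε ^ 2 * δ ^ 2 * Real.exp (δ * ‖x‖ ^ 2) ^ 2) * (∑ i, (x i) ^ 2) := by
    unfold gradSq
    have hterm : ∀ i : Fin n,
        (grad (fun y => w y + ε * Real.exp (δ * ‖y‖ ^ 2)) x i) ^ 2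
          = grad w x i ^ 2
            + (4 * ε * δ * Real.exp (δ * ‖x‖ ^ 2)) * (grad w x i * x i)
            + (4 * ε ^ 2 * δ ^ 2 * Real.exp (δ * ‖x‖ ^ 2) ^ 2) * (x i) ^ 2 := by
      intro i
      rw [grad_u hΩ hw hx ε δ i]
      ring
    simp only [hterm, Finset.sum_add_distrib, ← Finset.mul_sum]
  -- nonnegativity of the two coefficients
  have hB : (0:ℝ) ≤ gradSq w x - 4 * δ * w x * (∑ i, grad w x i * x i)
      + 4 * δ ^ 2 * (w x) ^ 2 * (∑ i, (x i) ^ 2) := by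
    have h1 : ∀ i : Fin n, (grad w x i - 2 * δ * w x * x i) ^ 2
        = grad w x i ^ 2 - (4 * δ * w x) * (grad w x i * x i)
          + (4 * δ ^ 2 * (w x) ^ 2) * (x i) ^ 2 := fun i => by ring
    have h2 : (0:ℝ) ≤ ∑ i, (grad w x i - 2 * δ * w x * x i) ^ 2 :=
      Finset.sum_nonneg fun i _ => sq_nonneg _
    simp only [h1, Finset.sum_add_distrib, Finset.sum_sub_distrib, ← Finset.mul_sum] at h2
    unfold gradSq
    linarith [h2]
  have hF : (0:ℝ) ≤ 3 / 2 * δ * w x - 2 * δ * (∑ i, grad w x i * x i)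
      + gradSq w x / (2 * w x) := by
    have key : 3 / 2 * δ * w x - 2 * δ * (∑ i, grad w x i * x i)
        + gradSq w x / (2 * w x)
        = (gradSq w x - 4 * δ * w x * (∑ i, grad w x i * x i)
            + 4 * δ ^ 2 * (w x) ^ 2 * (∑ i, (x i) ^ 2)) / (2 * w x)
          + δ * w x * (3 / 2 - 2 * (δ * (∑ i, (x i) ^ 2))) := by
      field_simp
      ring
    rw [key]
    have hd : δ * (∑ i, (x i) ^ 2) ≤ 1 / 2 := by rw [hr2]; exact hδr
    have h3 : (0:ℝ) ≤ δ * w x * (3 / 2 - 2 * (δ * (∑ i, (x i) ^ 2))) := by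
      apply mul_nonneg (by positivity)
      linarith
    have h4 : (0:ℝ) ≤ (gradSq w x - 4 * δ * w x * (∑ i, grad w x i * x i)
        + 4 * δ ^ 2 * (w x) ^ 2 * (∑ i, (x i) ^ 2)) / (2 * w x) :=
      div_nonneg hB (by linarith)
    linarith
  set a : ℝ := ε * (4 * δ ^ 2 * Real.exp (δ * ‖x‖ ^ 2)
      * (w x + ε * Real.exp (δ * ‖x‖ ^ 2))) with hadef
  set c : ℝ := ε * Real.exp (δ * ‖x‖ ^ 2)
      * (3 / 2 * δ * w x - 2 * δ * (∑ i, grad w x i * x i) + gradSq w x / (2 * w x))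
      + 2 * ε ^ 2 * δ * Real.exp (δ * ‖x‖ ^ 2) ^ 2
          * (1 - δ * (∑ i, (x i) ^ 2)) with hcdef
  have ha : 0 ≤ a := by
    rw [hadef]
    have : (0:ℝ) < w x + ε * Real.exp (δ * ‖x‖ ^ 2) := by positivity
    positivity
  have hc : 0 ≤ c := by
    rw [hcdef]
    have hd : δ * (∑ i, (x i) ^ 2) ≤ 1 / 2 := by rw [hr2]; exact hδr
    have h5 : (0:ℝ) ≤ 1 - δ * (∑ i, (x i) ^ 2) := by linarith
    have h6 := mul_nonneg (by positivity : (0:ℝ) ≤ ε * Real.exp (δ * ‖x‖ ^ 2)) hF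
    have h7 := mul_nonneg
      (by positivity : (0:ℝ) ≤ 2 * ε ^ 2 * δ * Real.exp (δ * ‖x‖ ^ 2) ^ 2) h5
    linarith
  refine psd_aux x a c ha hc _ fun i j => ?_
  simp only [Matrix.sub_apply, Matrix.add_apply, Matrix.smul_apply, smul_eq_mul, Aw,
    Matrix.one_apply]
  rw [hess_u hΩ hw hx ε δ i j, hQ, hadef, hcdef]
  by_cases hij : i = j
  · subst hij
    simp only [if_pos rfl, if_true]
    field_simp
    ring
  · simp only [if_neg hij]
    field_simp
    ring
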